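/- The full generating function Bₙ of the system λ₁/1 ≥ λ₂/2 ≥ ··· ≥ λ_{n−1}/(n−1) ≥ λₙ/1 ≥ 0 satisfies Bₙ(x₁,...,xₙ) = A_{n−1}(x₁,...,x_{n−1})/(1 − x₁x₂²x₃³···x_{n−1}^{n−1}xₙ), where A_{n−1} is the full generating function of anti-lecture hall compositions of length n−1. -/

import Mathlib

noncomputable section
open Classical

/-- The full generating function `Bₙ` (with `n = m+2`) of the system
`λ₁/1 ≥ λ₂/2 ≥ ⋯ ≥ λ_{n−1}/(n−1) ≥ λₙ/1 ≥ 0`, i.e. `(i+1)λᵢ ≥ i·λ_{i+1}` for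
`1 ≤ i ≤ n−2` together with `λ_{n−1} ≥ (n−1)·λₙ`. -/
def BGF (m : ℕ) : MvPowerSeries (Fin (m + 2)) ℤ :=
  fun d => if (∀ i : Fin (m + 2), ∀ h : (i : ℕ) + 1 < m + 1,
      ((i : ℕ) + 1) * d ⟨(i : ℕ) + 1, by omega⟩ ≤ ((i : ℕ) + 2) * d i) ∧
      (m + 1) * d (Fin.last (m + 1)) ≤ d ⟨m, by omega⟩
    then 1 else 0

/-- `A_{n−1}(x₁,…,x_{n−1})`, the full generating function of anti-lecture hall
compositions of length `n−1 = m+1`, viewed in the `n`-variable power series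
ring (coefficient nonzero only when the last exponent vanishes). -/
def AGFemb (m : ℕ) : MvPowerSeries (Fin (m + 2)) ℤ :=
  fun d => if (∀ i : Fin (m + 2), ∀ h : (i : ℕ) + 1 < m + 1,
      ((i : ℕ) + 1) * d ⟨(i : ℕ) + 1, by omega⟩ ≤ ((i : ℕ) + 2) * d i) ∧
      d (Fin.last (m + 1)) = 0
    then 1 else 0

lemma prod_monomial {σ R : Type*} [Fintype σ] [DecidableEq σ] [CommSemiring R]
    (f : σ → (σ →₀ ℕ)) :
    (∏ k : σ, MvPowerSeries.monomial (R := R) (f k) 1) =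
      MvPowerSeries.monomial (R := R) (∑ k : σ, f k) 1 := by
  classical
  induction (Finset.univ : Finset σ) using Finset.induction_on with
  | empty => simp [MvPowerSeries.monomial_zero_one]
  | insert a s h ih =>
      rw [Finset.prod_insert h, Finset.sum_insert h, ih,
        MvPowerSeries.monomial_mul_monomial, one_mul]

def Ccond (m : ℕ) (e : Fin (m + 2) →₀ ℕ) : Prop :=
  ∀ i : Fin (m + 2), ∀ h : (i : ℕ) + 1 < m + 1,
    ((i : ℕ) + 1) * e ⟨(i : ℕ) + 1, by omega⟩ ≤ ((i : ℕ) + 2) * e i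

def Bcond (m : ℕ) (e : Fin (m + 2) →₀ ℕ) : Prop :=
  Ccond m e ∧ (m + 1) * e (Fin.last (m + 1)) ≤ e ⟨m, by omega⟩

def Acond (m : ℕ) (e : Fin (m + 2) →₀ ℕ) : Prop :=
  Ccond m e ∧ e (Fin.last (m + 1)) = 0

lemma coeff_BGF (m : ℕ) (e : Fin (m + 2) →₀ ℕ) :
    MvPowerSeries.coeff (R := ℤ) e (BGF m) = if Bcond m e then 1 else 0 := by
  show (if _ then (1:ℤ) else 0) = _
  by_cases h : Bcond m e
  · rw [if_pos h, if_pos]; exact h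
  · rw [if_neg h, if_neg]; exact h

lemma coeff_AGFemb (m : ℕ) (e : Fin (m + 2) →₀ ℕ) :
    MvPowerSeries.coeff (R := ℤ) e (AGFemb m) = if Acond m e then 1 else 0 := by
  show (if _ then (1:ℤ) else 0) = _
  by_cases h : Acond m e
  · rw [if_pos h, if_pos]; exact h
  · rw [if_neg h, if_neg]; exact h

set_option maxHeartbeats 1000000 in
/-- `Bₙ(x₁,…,xₙ) = A_{n−1}(x₁,…,x_{n−1}) / (1 − x₁x₂²x₃³⋯x_{n−1}^{n−1}xₙ)`,
with the denominator cleared. -/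
theorem BGF_eq (m : ℕ) :
    BGF m * (1 - ∏ k : Fin (m + 2),
      MvPowerSeries.X k ^ (if k = Fin.last (m + 1) then 1 else (k : ℕ) + 1)) =
    AGFemb m := by
  classical
  obtain ⟨v, hvval⟩ : ∃ v : Fin (m + 2) →₀ ℕ,
      ∀ j : Fin (m + 2), v j = if j = Fin.last (m + 1) then 1 else (j : ℕ) + 1 :=
    ⟨Finsupp.equivFunOnFinite.symm _, fun j => rfl⟩
  have hprod : (∏ k : Fin (m + 2),
      MvPowerSeries.X (R := ℤ) k ^ (if k = Fin.last (m + 1) then 1 else (k : ℕ) + 1)) =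
      MvPowerSeries.monomial (R := ℤ) v 1 := by
    simp_rw [MvPowerSeries.X_pow_eq]
    rw [prod_monomial]
    have hveq : (∑ k : Fin (m + 2),
        Finsupp.single k (if k = Fin.last (m + 1) then 1 else (k : ℕ) + 1)) = v := by
      apply Finsupp.ext
      intro j
      rw [Finsupp.finset_sum_apply, Finset.sum_eq_single j, hvval]
      · simp
      · intro b _ hb; simp [Finsupp.single_apply, hb]
      · simp
    rw [hveq]
  rw [hprod, mul_sub, mul_one]
  ext d
  rw [map_sub, MvPowerSeries.coeff_mul_monomial, mul_one, coeff_AGFemb, coeff_BGF, coeff_BGF]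
  clear hprod
  have hmne : (⟨m, by omega⟩ : Fin (m+2)) ≠ Fin.last (m+1) := by
    intro h
    have := congrArg Fin.val h
    simp [Fin.last] at this
  by_cases hlast : d (Fin.last (m + 1)) = 0
  · -- v ≤ d fails
    have hnle : ¬ v ≤ d := by
      intro h
      have := h (Fin.last (m + 1))
      rw [hvval] at this
      simp [hlast] at this
    rw [if_neg hnle, sub_zero]
    by_cases hch : Ccond m d
    · rw [if_pos (show Bcond m d from ⟨hch, by rw [hlast, Nat.mul_zero]; exact Nat.zero_le _⟩),
        if_pos (show Acond m d from ⟨hch, hlast⟩)]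
    · rw [if_neg (show ¬ Bcond m d from fun h => hch h.1),
        if_neg (show ¬ Acond m d from fun h => hch h.1)]
  · -- d last ≥ 1 : A side vanishes
    have hdl1 : 1 ≤ d (Fin.last (m+1)) := by omega
    rw [if_neg (show ¬ Acond m d from fun h => hlast h.2), sub_eq_zero]
    -- B d implies v ≤ d
    have himp : Bcond m d → v ≤ d := by
      rintro ⟨hchain, hlastc⟩
      have key : ∀ t : ℕ, ∀ j : ℕ, ∀ hj : j < m + 1, m - j = t →
          (m + 1) * d (Fin.last (m+1)) * (j + 1) ≤ (m + 1) * d ⟨j, by omega⟩ := by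
        intro t
        induction t with
        | zero =>
            intro j hj hjt
            have hjm : j = m := by omega
            have hde : d ⟨j, by omega⟩ = d ⟨m, by omega⟩ :=
              congrArg d (Fin.ext (by simp [hjm]))
            rw [hde, hjm]
            calc (m + 1) * d (Fin.last (m+1)) * (m + 1)
                ≤ d ⟨m, by omega⟩ * (m+1) := Nat.mul_le_mul_right _ hlastc
              _ = (m + 1) * d ⟨m, by omega⟩ := by ring
        | succ t ih =>
            intro j hj hjt
            have hjm : j < m := by omega
            have p1 : j + 1 < m + 2 := by omega
            have p0 : j < m + 2 := by omega
            have hih : (m + 1) * d (Fin.last (m+1)) * (j + 1 + 1) ≤ (m + 1) * d ⟨j+1, p1⟩ := by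
              have := ih (j+1) (by omega) (by omega)
              convert this using 3
            have hc : (j + 1) * d ⟨j+1, p1⟩ ≤ (j + 2) * d ⟨j, p0⟩ := by
              have := hchain ⟨j, p0⟩ (by simpa using (by omega : j + 1 < m + 1))
              convert this using 3
            have hmain : (m + 1) * d (Fin.last (m+1)) * (j + 1) * (j + 2) ≤
                (m + 1) * d ⟨j, p0⟩ * (j + 2) := by nlinarith
            have := Nat.le_of_mul_le_mul_right hmain (by omega : 0 < j + 2)
            convert this using 3
      intro j
      rw [hvval]
      by_cases hjl : j = Fin.last (m+1)
      · rw [if_pos hjl, hjl]; omega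
      · have hjv : (j : ℕ) < m + 1 := by
          have h2 := j.isLt
          have : (j : ℕ) ≠ m + 1 := fun h => hjl (Fin.ext (by simp [Fin.last, h]))
          omega
        rw [if_neg hjl]
        have hk := key (m - (j : ℕ)) (j : ℕ) hjv rfl
        have hjeq : d ⟨(j:ℕ), by omega⟩ = d j := congrArg d (Fin.ext rfl)
        rw [hjeq] at hk
        have h4 : (m+1) * 1 ≤ (m+1) * d (Fin.last (m+1)) := Nat.mul_le_mul_left _ hdl1
        have h3 : (m+1) * ((j:ℕ)+1) ≤ (m+1) * d j := by
          calc (m+1) * ((j:ℕ)+1) = (m+1) * 1 * ((j:ℕ)+1) := by ring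
            _ ≤ (m+1) * d (Fin.last (m+1)) * ((j:ℕ)+1) := Nat.mul_le_mul_right _ h4
            _ ≤ (m+1) * d j := hk
        exact Nat.le_of_mul_le_mul_left h3 (by omega)
    by_cases hvle : v ≤ d
    · have hsub : ∀ j : Fin (m+2), ((d - v) j : ℤ) = (d j : ℤ) - (v j : ℤ) := by
        intro j
        rw [Finsupp.tsub_apply]
        have := hvle j
        omega
      have hne2 : ∀ i : Fin (m+2), (i:ℕ) < m + 1 → i ≠ Fin.last (m+1) := by
        intro i hi h
        have := congrArg Fin.val h
        simp [Fin.last] at this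
        omega
      have hsubv : ∀ i : Fin (m+2), (i:ℕ) < m + 1 →
          ((d - v) i : ℤ) = (d i : ℤ) - ((i:ℕ)+1) ∧ (((i:ℕ):ℤ)+1) ≤ (d i : ℤ) := by
        intro i hi
        have e := hsub i
        rw [hvval, if_neg (hne2 i hi)] at e
        have b := hvle i
        rw [hvval, if_neg (hne2 i hi)] at b
        constructor
        · rw [e]; push_cast; ring
        · exact_mod_cast b
      have hsl : ((d - v) (Fin.last (m+1)) : ℤ) = (d (Fin.last (m+1)) : ℤ) - 1 := by
        have e := hsub (Fin.last (m+1))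
        rw [hvval, if_pos rfl] at e
        rw [e]; push_cast; ring
      have hmv : ((⟨m, by omega⟩ : Fin (m+2)) : ℕ) < m + 1 := Nat.lt_succ_self m
      have hiff : Bcond m (d - v) ↔ Bcond m d := by
        have step : ∀ i : Fin (m + 2), ∀ hi : (i : ℕ) + 1 < m + 1,
            ((((i : ℕ) + 1) * (d - v) ⟨(i : ℕ) + 1, by omega⟩ ≤ ((i : ℕ) + 2) * (d - v) i) ↔
            (((i : ℕ) + 1) * d ⟨(i : ℕ) + 1, by omega⟩ ≤ ((i : ℕ) + 2) * d i)) := by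
          intro i hi
          obtain ⟨e1, b1⟩ := hsubv ⟨(i:ℕ)+1, by omega⟩ hi
          obtain ⟨e2, b2⟩ := hsubv i (by omega)
          simp only [Fin.val_mk] at e1 b1
          constructor
          · intro h
            zify at h ⊢
            push_cast at h e1 e2 b1 b2 ⊢
            rw [e1, e2] at h
            linarith [h, b1, b2]
          · intro h
            zify at h ⊢
            push_cast at h e1 e2 b1 b2 ⊢
            rw [e1, e2]
            linarith [h, b1, b2]
        have stepl : ((m + 1) * (d - v) (Fin.last (m + 1)) ≤ (d - v) ⟨m, by omega⟩) ↔
            ((m + 1) * d (Fin.last (m + 1)) ≤ d ⟨m, by omega⟩) := by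
          obtain ⟨e2, b2⟩ := hsubv ⟨m, by omega⟩ hmv
          simp only [Fin.val_mk] at e2 b2
          have hdl1' : (1:ℤ) ≤ (d (Fin.last (m+1)) : ℤ) := by exact_mod_cast hdl1
          constructor
          · intro h
            zify at h ⊢
            push_cast at h hsl e2 b2 ⊢
            rw [hsl, e2] at h
            linarith [h, b2, hdl1']
          · intro h
            zify at h ⊢
            push_cast at h hsl e2 b2 ⊢
            rw [hsl, e2]
            linarith [h, b2, hdl1']
        constructor
        · rintro ⟨hc, hl⟩
          exact ⟨fun i hi => (step i hi).mp (hc i hi), stepl.mp hl⟩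
        · rintro ⟨hc, hl⟩
          exact ⟨fun i hi => (step i hi).mpr (hc i hi), stepl.mpr hl⟩
      rw [if_pos hvle]
      by_cases hBd : Bcond m d
      · rw [if_pos hBd, if_pos (hiff.mpr hBd)]
      · rw [if_neg hBd, if_neg (show ¬ Bcond m (d - v) from fun h => hBd (hiff.mp h))]
    · rw [if_neg hvle, if_neg (show ¬ Bcond m d from fun h => hvle (himp h))]
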